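/- For n-variate real homogeneous polynomials f = Σ_{|α|=d} b_α x^α and g = Σ_{|α|=d} c_α x^α of degree d, the Weyl–Bombieri inner product ⟨f,g⟩_W := Σ_{|α|=d} b_α c_α / binom(d,α) is invariant under orthogonal changes of variables: for any U ∈ O(n), ⟨f∘U, g∘U⟩_W = ⟨f,g⟩_W. -/

import Mathlib

open MvPolynomial

/-- The Weyl–Bombieri inner product of two polynomials:
`⟨f,g⟩_W = Σ_α f_α g_α / binom(d,α)` (the sum may be taken over the union of supports). -/
noncomputable def weylInner {n : ℕ} (f g : MvPolynomial (Fin n) ℝ) : ℝ :=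
  ∑ α ∈ f.support ∪ g.support,
    (f.coeff α * g.coeff α) / (Nat.multinomial Finset.univ α : ℝ)

/-- Precomposition of a polynomial with the linear map given by a matrix `U`:
`(f ∘ U)(x) = f (U x)`. -/
noncomputable def compMatrix {n : ℕ} (f : MvPolynomial (Fin n) ℝ)
    (U : Matrix (Fin n) (Fin n) ℝ) : MvPolynomial (Fin n) ℝ :=
  MvPolynomial.aeval (fun i => ∑ j, Matrix.of U i j • (X j : MvPolynomial (Fin n) ℝ)) f

set_option synthInstance.maxHeartbeats 1000000
set_option maxHeartbeats 1000000

namespace WeylAux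

variable {n : ℕ}

abbrev P (n : ℕ) := MvPolynomial (Fin n) ℝ

noncomputable abbrev pd (i : Fin n) : Module.End ℝ (P n) :=
  ((pderiv i : Derivation ℝ (P n) (P n)) : P n →ₗ[ℝ] P n)

lemma pd_pow_monomial (i : Fin n) (k : ℕ) (β : Fin n →₀ ℕ) (b : ℝ) :
    (pd i ^ k) (monomial β b)
      = monomial (β - Finsupp.single i k) (b * (β i).descFactorial k) := by
  induction k with
  | zero => simp
  | succ k ih =>
    rw [pow_succ', Module.End.mul_apply, ih]
    show (pderiv i) _ = _
    rw [pderiv_monomial]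
    have he : β - Finsupp.single i k - Finsupp.single i 1 = β - Finsupp.single i (k + 1) := by
      rw [tsub_tsub, ← Finsupp.single_add]
    have hc : (β - Finsupp.single i k) i = β i - k := by
      simp [Finsupp.tsub_apply]
    rw [he, hc, Nat.descFactorial_succ]
    push_cast
    ring_nf

lemma pd_comm (i j : Fin n) : pd i * pd j = pd j * pd i := by
  refine LinearMap.ext fun f => ?_
  induction f using MvPolynomial.induction_on' with
  | monomial s a =>
    simp only [Module.End.mul_apply]
    rcases eq_or_ne i j with rfl | hij
    · rfl
    · show (pderiv i) ((pderiv j) (monomial s a)) = (pderiv j) ((pderiv i) (monomial s a))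
      simp only [pderiv_monomial]
      have he : s - Finsupp.single j 1 - Finsupp.single i 1
          = s - Finsupp.single i 1 - Finsupp.single j 1 := by
        rw [tsub_tsub, tsub_tsub, add_comm]
      have h1 : ((s - Finsupp.single j 1 : Fin n →₀ ℕ)) i = s i := by
        simp [Finsupp.tsub_apply, Finsupp.single_eq_of_ne hij]
      have h2 : ((s - Finsupp.single i 1 : Fin n →₀ ℕ)) j = s j := by
        simp [Finsupp.tsub_apply, Finsupp.single_eq_of_ne hij.symm]
      rw [he, h1, h2]
      ring_nf
  | add p q hp hq =>
    simp only [Module.End.mul_apply, map_add] at hp hq ⊢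
    rw [hp, hq]

lemma pd_set_comm : ∀ a ∈ Set.range (pd (n := n)), ∀ b ∈ Set.range (pd (n := n)),
    a * b = b * a := by
  rintro _ ⟨i, rfl⟩ _ ⟨j, rfl⟩
  exact pd_comm i j

/-- The (commutative) algebra of constant-coefficient differential operators. -/
noncomputable abbrev DOp (n : ℕ) : Subalgebra ℝ (Module.End ℝ (P n)) :=
  Algebra.adjoin ℝ (Set.range (pd (n := n)))

noncomputable instance : CommSemiring (DOp n) :=
  Algebra.adjoinCommSemiringOfComm ℝ (pd_set_comm (n := n))

noncomputable def genA (i : Fin n) : DOp n :=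
  ⟨pd i, Algebra.subset_adjoin ⟨i, rfl⟩⟩

/-- Substitution of partial derivatives for the variables. -/
noncomputable def PhiA : P n →ₐ[ℝ] DOp n := aeval genA

lemma coe_prod_genA_apply (s : Finset (Fin n)) (α : Fin n →₀ ℕ) (β : Fin n →₀ ℕ) (b : ℝ) :
    ((∏ i ∈ s, genA i ^ α i : DOp n) : Module.End ℝ (P n)) (monomial β b)
      = monomial (β - ∑ i ∈ s, Finsupp.single i (α i))
          (b * ∏ i ∈ s, (β i).descFactorial (α i)) := by
  induction s using Finset.cons_induction with
  | empty => simp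
  | cons a s ha ih =>
    rw [Finset.prod_cons, MulMemClass.coe_mul, SubmonoidClass.coe_pow, Module.End.mul_apply, ih]
    show (pd a ^ α a) _ = _
    rw [pd_pow_monomial]
    have hS : ((β - ∑ i ∈ s, Finsupp.single i (α i) : Fin n →₀ ℕ)) a = β a := by
      rw [Finsupp.tsub_apply]
      have : ((∑ i ∈ s, Finsupp.single i (α i) : Fin n →₀ ℕ)) a = 0 := by
        rw [Finsupp.finset_sum_apply]
        exact Finset.sum_eq_zero fun i hi =>
          Finsupp.single_eq_of_ne (by rintro rfl; exact ha hi)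
      rw [this]
      omega
    rw [hS, tsub_tsub, add_comm, Finset.sum_cons, Finset.prod_cons]
    push_cast
    ring_nf

lemma coe_PhiA_monomial_apply (α β : Fin n →₀ ℕ) (a b : ℝ) :
    ((PhiA (monomial α a) : Module.End ℝ (P n))) (monomial β b)
      = a • monomial (β - α) (b * ∏ i, (β i).descFactorial (α i)) := by
  rw [PhiA, aeval_monomial, MulMemClass.coe_mul]
  have h1 : α.prod (fun i e => genA (n := n) i ^ e) = ∏ i, genA i ^ α i :=
    Finsupp.prod_fintype _ _ fun i => pow_zero _
  rw [h1, Module.End.mul_apply, coe_prod_genA_apply, Finsupp.univ_sum_single]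
  have h2 : ((algebraMap ℝ (DOp n) a : DOp n) : Module.End ℝ (P n))
      = algebraMap ℝ (Module.End ℝ (P n)) a := rfl
  rw [h2, Algebra.algebraMap_eq_smul_one]
  simp

lemma constantCoeff_PhiA_monomial_monomial (α β : Fin n →₀ ℕ) (a b : ℝ) :
    constantCoeff ((PhiA (monomial α a) : Module.End ℝ (P n)) (monomial β b))
      = if β = α then a * b * ∏ i, ((α i).factorial : ℝ) else 0 := by
  rw [coe_PhiA_monomial_apply]
  rw [smul_eq_C_mul, map_mul, constantCoeff_C, constantCoeff_monomial]
  rcases eq_or_ne β α with rfl | hne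
  · simp only [if_pos rfl, tsub_self, Nat.descFactorial_self]
    push_cast
    ring
  · rw [if_neg hne]
    by_cases hle : β ≤ α
    · have hnle : ¬ α ≤ β := fun h => hne (le_antisymm hle h)
      rw [Finsupp.le_def] at hnle
      push_neg at hnle
      obtain ⟨i, hi⟩ := hnle
      have : ∏ j, (β j).descFactorial (α j) = 0 :=
        Finset.prod_eq_zero (Finset.mem_univ i)
          (Nat.descFactorial_eq_zero_iff_lt.2 hi)
      simp [this]
    · rw [if_neg (by rwa [tsub_eq_zero_iff_le])]
      ring

lemma constantCoeff_PhiA_apply (f g : P n) :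
    constantCoeff ((PhiA f : Module.End ℝ (P n)) g)
      = ∑ α ∈ f.support ∪ g.support,
          f.coeff α * g.coeff α * ∏ i, ((α i).factorial : ℝ) := by
  have step1 : (PhiA f : Module.End ℝ (P n))
      = ∑ α ∈ f.support, (PhiA (monomial α (f.coeff α)) : Module.End ℝ (P n)) := by
    conv_lhs => rw [← support_sum_monomial_coeff f]
    rw [map_sum]
    exact AddSubmonoidClass.coe_finset_sum _ _
  have step2 : ∀ α : Fin n →₀ ℕ,
      constantCoeff ((PhiA (monomial α (f.coeff α)) : Module.End ℝ (P n)) g)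
        = f.coeff α * g.coeff α * ∏ i, ((α i).factorial : ℝ) := by
    intro α
    conv_lhs => rw [← support_sum_monomial_coeff g]
    rw [map_sum, map_sum]
    rw [Finset.sum_congr rfl fun β _ => constantCoeff_PhiA_monomial_monomial α β _ _]
    rw [Finset.sum_ite_eq' g.support α]
    by_cases hα : α ∈ g.support
    · rw [if_pos hα]
    · rw [if_neg hα, notMem_support_iff.mp hα]
      ring
  rw [step1, LinearMap.sum_apply, map_sum, Finset.sum_congr rfl fun α _ => step2 α]
  refine Finset.sum_subset Finset.subset_union_left fun α _ hα => ?_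
  rw [notMem_support_iff.mp hα]
  ring

/-- Precomposition with the linear change of variables given by `U`, as an algebra hom. -/
noncomputable def sigmaU (U : Matrix (Fin n) (Fin n) ℝ) : P n →ₐ[ℝ] P n :=
  aeval (fun i => ∑ j, Matrix.of U i j • (X j : P n))

lemma pderiv_sigmaU (U : Matrix (Fin n) (Fin n) ℝ) (j : Fin n) (g : P n) :
    pderiv j (sigmaU U g) = ∑ k, U k j • sigmaU U (pderiv k g) := by
  induction g using MvPolynomial.induction_on with
  | C a => simp [sigmaU, pderiv_C]
  | add p q hp hq => simp [map_add, hp, hq, Finset.sum_add_distrib, smul_add]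
  | mul_X p i hp =>
    have hdXi : (pderiv j) (sigmaU U (X i)) = C (U i j) := by
      have hXi : sigmaU U (X i) = ∑ l, U i l • (X l : P n) := by simp [sigmaU]; rfl
      rw [hXi, map_sum]
      rw [Finset.sum_eq_single j (fun l _ hl => by
        rw [Derivation.map_smul, pderiv_X_of_ne hl, smul_zero]) (fun h => (h (Finset.mem_univ j)).elim)]
      rw [Derivation.map_smul, pderiv_X_self, smul_eq_C_mul, mul_one]
    have hrhs : ∀ k, sigmaU U (pderiv k (p * X i))
        = sigmaU U (pderiv k p) * sigmaU U (X i) + if k = i then sigmaU U p else 0 := by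
      intro k
      rw [pderiv_mul]
      rcases eq_or_ne k i with rfl | hk
      · rw [pderiv_X_self, mul_one, map_add, map_mul, if_pos rfl]
      · rw [pderiv_X_of_ne (Ne.symm hk), mul_zero, add_zero, map_mul, if_neg hk, add_zero]
    have hsum : ∑ k, U k j • sigmaU U (pderiv k (p * X i))
        = (∑ k, U k j • sigmaU U (pderiv k p)) * sigmaU U (X i) + U i j • sigmaU U p := by
      simp only [hrhs, smul_add, Finset.sum_add_distrib, smul_ite, smul_zero]
      congr 1
      · rw [Finset.sum_mul]
        exact Finset.sum_congr rfl fun k _ => (smul_mul_assoc _ _ _).symm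
      · rw [Finset.sum_ite_eq' Finset.univ i]
        simp
    rw [map_mul, pderiv_mul, hdXi, hp, hsum]
    congr 1
    rw [smul_eq_C_mul]
    ring

lemma PhiA_sigmaU_comm (U : Matrix (Fin n) (Fin n) ℝ)
    (hU : ∀ i k, ∑ l, U i l * U k l = if i = k then (1 : ℝ) else 0) (f : P n) :
    ∀ g : P n, (PhiA (sigmaU U f) : Module.End ℝ (P n)) (sigmaU U g)
      = sigmaU U ((PhiA f : Module.End ℝ (P n)) g) := by
  induction f using MvPolynomial.induction_on with
  | C a =>
    intro g
    have h1 : sigmaU U (C a : P n) = C a := by simp [sigmaU]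
    have h2 : (PhiA (C a : P n) : Module.End ℝ (P n))
        = algebraMap ℝ (Module.End ℝ (P n)) a := by
      rw [show (C a : P n) = algebraMap ℝ (P n) a from rfl, AlgHom.commutes]
      rfl
    rw [h1, h2]
    rw [Module.algebraMap_end_apply, Module.algebraMap_end_apply, map_smul]
  | add p q hp hq =>
    intro g
    rw [map_add, map_add, Subalgebra.coe_add, LinearMap.add_apply, map_add, hp g, hq g]
    rw [Subalgebra.coe_add, LinearMap.add_apply, map_add]
  | mul_X p i hp =>
    intro g
    have hXstep : (PhiA (sigmaU U (X i)) : Module.End ℝ (P n)) (sigmaU U g)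
        = sigmaU U (pderiv i g) := by
      have h1 : sigmaU U (X i) = ∑ l, U i l • (X l : P n) := by simp [sigmaU]; rfl
      have h2 : (PhiA (sigmaU U (X i)) : Module.End ℝ (P n))
          = ∑ l, U i l • pd l := by
        rw [h1, map_sum]
        rw [AddSubmonoidClass.coe_finset_sum]
        refine Finset.sum_congr rfl fun l _ => ?_
        rw [map_smul]
        have : PhiA (X l : P n) = genA l := aeval_X _ l
        rw [this]
        rfl
      rw [h2, LinearMap.sum_apply]
      have h3 : ∀ l, (U i l • pd l) (sigmaU U g) = U i l • pderiv l (sigmaU U g) := by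
        intro l
        rfl
      rw [Finset.sum_congr rfl fun l _ => h3 l]
      have h4 : ∀ l, U i l • pderiv l (sigmaU U g)
          = ∑ k, (U i l * U k l) • sigmaU U (pderiv k g) := by
        intro l
        rw [pderiv_sigmaU, Finset.smul_sum]
        exact Finset.sum_congr rfl fun k _ => (mul_smul _ _ _).symm
      rw [Finset.sum_congr rfl fun l _ => h4 l, Finset.sum_comm]
      have h5 : ∀ k, ∑ l, (U i l * U k l) • sigmaU U (pderiv k g)
          = (if i = k then (1 : ℝ) else 0) • sigmaU U (pderiv k g) := by
        intro k
        rw [← Finset.sum_smul, hU i k]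
      rw [Finset.sum_congr rfl fun k _ => h5 k]
      simp
    rw [map_mul, map_mul, MulMemClass.coe_mul, Module.End.mul_apply, hXstep]
    rw [map_mul, MulMemClass.coe_mul, Module.End.mul_apply]
    have : (PhiA (X i : P n) : Module.End ℝ (P n)) g = pderiv i g := by
      rw [show PhiA (X i : P n) = genA i from aeval_X _ i]
      rfl
    rw [this, hp (pderiv i g)]

lemma constantCoeff_sigmaU (U : Matrix (Fin n) (Fin n) ℝ) (h : P n) :
    constantCoeff (sigmaU U h) = constantCoeff h := by
  have e : (aeval (fun _ : Fin n => (0 : ℝ))).comp (sigmaU U)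
      = aeval (fun _ : Fin n => (0 : ℝ)) := by
    rw [sigmaU, comp_aeval]
    congr 1
    funext i
    simp
  have e1 := congrArg (fun φ => φ h) e
  simp only [AlgHom.comp_apply] at e1
  have e2 : ∀ p : P n, aeval (fun _ : Fin n => (0 : ℝ)) p = constantCoeff p := by
    intro p
    rw [aeval_zero']
    simp
  rw [← e2, e1, e2]

lemma sigmaU_isHomogeneous (U : Matrix (Fin n) (Fin n) ℝ) {f : P n} {d : ℕ}
    (hf : f.IsHomogeneous d) : (sigmaU U f).IsHomogeneous d := by
  have h1 : ∀ i, (∑ j, Matrix.of U i j • (X j : P n)).IsHomogeneous 1 := by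
    intro i
    refine IsHomogeneous.sum _ _ _ fun j _ => ?_
    rw [smul_eq_C_mul]
    exact (isHomogeneous_X ℝ j).C_mul _
  have := hf.aeval (fun i => ∑ j, Matrix.of U i j • (X j : P n)) h1
  rwa [one_mul] at this

end WeylAux

lemma weylInner_eq_of_isHomogeneous {n d : ℕ} (f g : MvPolynomial (Fin n) ℝ)
    (hf : f.IsHomogeneous d) (hg : g.IsHomogeneous d) :
    weylInner f g = (∑ α ∈ f.support ∪ g.support,
      f.coeff α * g.coeff α * ∏ i, ((α i).factorial : ℝ)) / (d.factorial : ℝ) := by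
  rw [weylInner, Finset.sum_div]
  refine Finset.sum_congr rfl fun α hα => ?_
  by_cases h0 : f.coeff α * g.coeff α = 0
  · rw [h0]
    simp
  · have hfα : f.coeff α ≠ 0 := fun h => h0 (by rw [h, zero_mul])
    have hdeg : α.degree = d := by
      by_contra hne
      exact hfα (hf.coeff_eq_zero hne)
    have hsum : ∑ i, α i = d := by
      rw [← hdeg, Finsupp.degree]
      exact (Finset.sum_subset (Finset.subset_univ _)
        (fun i _ hi => Finsupp.notMem_support_iff.mp hi)).symm
    have hspec : (∏ i, (α i).factorial) * Nat.multinomial Finset.univ α = d.factorial := by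
      rw [Nat.multinomial_spec, hsum]
    have hm : (Nat.multinomial Finset.univ α : ℝ) ≠ 0 := by
      exact_mod_cast (Nat.multinomial_pos _ _).ne'
    have hp : (∏ i, ((α i).factorial : ℝ)) ≠ 0 := by positivity
    have hfac : (d.factorial : ℝ)
        = (∏ i, ((α i).factorial : ℝ)) * (Nat.multinomial Finset.univ α : ℝ) := by
      rw [← hspec]
      push_cast
      ring
    rw [hfac]
    field_simp

/-- the Weyl–Bombieri inner product of homogeneous degree-`d` polynomials is
invariant under orthogonal changes of variables. -/
theorem weylInner_comp_orthogonal {n d : ℕ} (f g : MvPolynomial (Fin n) ℝ)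
    (hf : f.IsHomogeneous d) (hg : g.IsHomogeneous d)
    (U : Matrix (Fin n) (Fin n) ℝ) (hU : U ∈ Matrix.orthogonalGroup (Fin n) ℝ) :
    weylInner (compMatrix f U) (compMatrix g U) = weylInner f g := by
  have hcomp : ∀ h : MvPolynomial (Fin n) ℝ, compMatrix h U = WeylAux.sigmaU U h :=
    fun h => rfl
  have hUU : ∀ i k, ∑ l, U i l * U k l = if i = k then (1 : ℝ) else 0 := by
    intro i k
    have h1 : U * star U = 1 := (Matrix.mem_orthogonalGroup_iff (Fin n) ℝ).mp hU
    calc ∑ l, U i l * U k l = (U * star U) i k := by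
          simp [Matrix.mul_apply, Matrix.star_apply]
      _ = (1 : Matrix (Fin n) (Fin n) ℝ) i k := by rw [h1]
      _ = if i = k then 1 else 0 := Matrix.one_apply
  rw [hcomp, hcomp]
  rw [weylInner_eq_of_isHomogeneous _ _ (WeylAux.sigmaU_isHomogeneous U hf)
      (WeylAux.sigmaU_isHomogeneous U hg),
    weylInner_eq_of_isHomogeneous _ _ hf hg]
  congr 1
  rw [← WeylAux.constantCoeff_PhiA_apply, ← WeylAux.constantCoeff_PhiA_apply]
  rw [WeylAux.PhiA_sigmaU_comm U hUU f g, WeylAux.constantCoeff_sigmaU]
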